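/- Let p be a prime and suppose F contains a primitive p-th root of unity ω. Let Φ, Ψ ∈ F(x_1,…,x_n) and γ ∈ S_n with γ^p = id, suppose G_Φ is the disjoint union of the cosets G_Ψ, γG_Ψ, γ²G_Ψ, …, γ^{p−1}G_Ψ, and suppose γG_Ψ = G_Ψγ. Then the element Θ = Ψ + ωγΨ + (ωγ)²Ψ + ⋯ + (ωγ)^{p−1}Ψ = Σ_{i=0}^{p−1} ω^i·(γ^iΨ) satisfies G_Θ ⊇ G_Ψ (hence Θ ∈ F(e_1,…,e_n,Ψ)) and Θ^p ∈ F(e_1,…,e_n,Φ). -/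

import Mathlib

open MvPolynomial

set_option maxHeartbeats 1000000
set_option synthInstance.maxHeartbeats 200000

/-- The action of a permutation `σ ∈ S_n` on the rational function field `F(x_1,…,x_n)`,
given by `Φ(x_1,…,x_n) ↦ Φ(x_{σ(1)},…,x_{σ(n)})`. -/
noncomputable def permAct (F : Type*) [Field F] (n : ℕ) (σ : Equiv.Perm (Fin n)) :
    FractionRing (MvPolynomial (Fin n) F) ≃+* FractionRing (MvPolynomial (Fin n) F) :=
  IsFractionRing.ringEquivOfRingEquiv (MvPolynomial.renameEquiv F σ).toRingEquiv

/-- The constants from `F` inside `F(x_1,…,x_n)`. -/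
noncomputable def constSet (F : Type*) [Field F] (n : ℕ) :
    Set (FractionRing (MvPolynomial (Fin n) F)) :=
  Set.range fun a : F =>
    algebraMap (MvPolynomial (Fin n) F) (FractionRing (MvPolynomial (Fin n) F)) (C a)

/-- The elementary symmetric polynomials `e_1,…,e_n` inside `F(x_1,…,x_n)`. -/
noncomputable def esymmSet (F : Type*) [Field F] (n : ℕ) :
    Set (FractionRing (MvPolynomial (Fin n) F)) :=
  Set.range fun i : Fin n =>
    algebraMap (MvPolynomial (Fin n) F) (FractionRing (MvPolynomial (Fin n) F))
      (esymm (Fin n) F ((i : ℕ) + 1))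

section Aux
variable {F : Type*} [Field F] {n : ℕ}

local notation "R" => MvPolynomial (Fin n) F
local notation "K" => FractionRing (MvPolynomial (Fin n) F)

theorem permAct_algebraMap (σ : Equiv.Perm (Fin n)) (f : MvPolynomial (Fin n) F) :
    permAct F n σ (algebraMap R K f) = algebraMap R K (rename σ f) :=
  IsFractionRing.ringEquivOfRingEquiv_algebraMap _ f

theorem permAct_mul (σ τ : Equiv.Perm (Fin n)) (x : K) :
    permAct F n (σ * τ) x = permAct F n σ (permAct F n τ x) := by
  have h : ((permAct F n (σ * τ)) : K →+* K) =
      ((permAct F n σ : K →+* K).comp (permAct F n τ : K →+* K)) := by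
    apply IsLocalization.ringHom_ext (nonZeroDivisors R)
    refine RingHom.ext fun f => ?_
    show permAct F n (σ * τ) (algebraMap R K f) = permAct F n σ (permAct F n τ (algebraMap R K f))
    rw [permAct_algebraMap, permAct_algebraMap, permAct_algebraMap, rename_rename]
    rfl
  exact DFunLike.congr_fun h x

theorem permAct_one (x : K) : permAct F n 1 x = x := by
  have h : ((permAct F n 1) : K →+* K) = RingHom.id K := by
    apply IsLocalization.ringHom_ext (nonZeroDivisors R)
    refine RingHom.ext fun f => ?_
    show permAct F n 1 (algebraMap R K f) = algebraMap R K f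
    rw [permAct_algebraMap, Equiv.Perm.coe_one, rename_id, AlgHom.id_apply]
  exact DFunLike.congr_fun h x

noncomputable instance permMSA : MulSemiringAction (Equiv.Perm (Fin n)) K where
  smul σ x := permAct F n σ x
  one_smul := permAct_one
  mul_smul := permAct_mul
  smul_zero σ := show permAct F n σ 0 = 0 from map_zero _
  smul_add σ x y := show permAct F n σ (x + y) = permAct F n σ x + permAct F n σ y from
    map_add _ _ _
  smul_one σ := show permAct F n σ 1 = 1 from map_one _
  smul_mul σ x y := show permAct F n σ (x * y) = permAct F n σ x * permAct F n σ y from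
    map_mul _ _ _

theorem permAct_smul_def (σ : Equiv.Perm (Fin n)) (x : K) : σ • x = permAct F n σ x := rfl

instance : FaithfulSMul (Equiv.Perm (Fin n)) K where
  eq_of_smul_eq_smul {σ τ} h := by
    ext i
    have := h (algebraMap R K (X i))
    rw [permAct_smul_def, permAct_smul_def, permAct_algebraMap, permAct_algebraMap,
      rename_X, rename_X] at this
    exact congrArg Fin.val (X_injective (IsFractionRing.injective R K this))

theorem symm_mem (q : MvPolynomial (Fin n) F) (hq : q.IsSymmetric) :
    algebraMap R K q ∈ Subfield.closure (constSet F n ∪ esymmSet F n) := by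
  obtain ⟨r, hr⟩ := esymmAlgHom_surjective (σ := Fin n) (n := n) F (by simp) ⟨q, hq⟩
  have hq' : q = aeval (fun i : Fin n => esymm (Fin n) F ((i : ℕ) + 1)) r := by
    have := congrArg Subtype.val hr
    rw [esymmAlgHom_apply] at this
    exact this.symm
  rw [hq']
  clear hq' hr hq
  induction r using MvPolynomial.induction_on with
  | C a =>
    rw [aeval_C]
    exact Subfield.subset_closure (Or.inl ⟨a, rfl⟩)
  | add f g hf hg =>
    rw [map_add, map_add]
    exact Subfield.add_mem _ hf hg
  | mul_X f i hf =>
    rw [map_mul, aeval_X, map_mul]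
    exact Subfield.mul_mem _ hf (Subfield.subset_closure (Or.inr ⟨i, rfl⟩))

theorem fixed_mem (r : K) (hr : ∀ σ : Equiv.Perm (Fin n), permAct F n σ r = r) :
    r ∈ Subfield.closure (constSet F n ∪ esymmSet F n) := by
  obtain ⟨f, g, hg, hfg⟩ := IsFractionRing.div_surjective (A := R) r
  have hg0 : g ≠ 0 := nonZeroDivisors.ne_zero hg
  set g₀ : MvPolynomial (Fin n) F := ∏ σ : Equiv.Perm (Fin n), rename σ g with hg₀def
  have hg₀symm : g₀.IsSymmetric := by
    intro τ
    rw [hg₀def, map_prod]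
    simp_rw [rename_rename]
    exact Fintype.prod_equiv (Equiv.mulLeft τ) _ _ (fun σ => by congr 1)
  have hg₀0 : g₀ ≠ 0 := by
    rw [hg₀def]
    refine Finset.prod_ne_zero_iff.mpr fun σ _ h => hg0 ?_
    exact rename_injective (⇑σ) σ.injective (by rw [h, map_zero])
  have hag : algebraMap R K g ≠ 0 :=
    (map_ne_zero_iff _ (IsFractionRing.injective R K)).mpr hg0
  have hag₀ : algebraMap R K g₀ ≠ 0 :=
    (map_ne_zero_iff _ (IsFractionRing.injective R K)).mpr hg₀0
  obtain ⟨h₀, hh₀def⟩ : ∃ h₀ : MvPolynomial (Fin n) F,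
      h₀ = f * ∏ σ ∈ Finset.univ.erase (1 : Equiv.Perm (Fin n)), rename σ g := ⟨_, rfl⟩
  have h1g : rename (⇑(1 : Equiv.Perm (Fin n))) g = g := by
    rw [Equiv.Perm.coe_one]; exact rename_id_apply g
  have hsplit : g₀ = g * ∏ σ ∈ Finset.univ.erase (1 : Equiv.Perm (Fin n)), rename σ g := by
    rw [hg₀def, ← Finset.mul_prod_erase Finset.univ _ (Finset.mem_univ 1), h1g]
  have key : r * algebraMap R K g₀ = algebraMap R K h₀ := by
    rw [← hfg, hsplit, hh₀def, map_mul, map_mul]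
    field_simp
  have hh₀symm : h₀.IsSymmetric := by
    intro τ
    have h1 : algebraMap R K (rename τ h₀) = algebraMap R K h₀ := by
      rw [← permAct_algebraMap, ← key, map_mul, hr τ, permAct_algebraMap, hg₀symm τ, key]
    exact IsFractionRing.injective R K h1
  have hrr : r = algebraMap R K h₀ / algebraMap R K g₀ := by
    rw [← key]
    field_simp
  rw [hrr]
  exact Subfield.div_mem _ (symm_mem _ hh₀symm) (symm_mem _ hg₀symm)

theorem fixed_mem_adjoin (Ξ x : K)
    (hx : ∀ σ : Equiv.Perm (Fin n), permAct F n σ Ξ = Ξ → permAct F n σ x = x) :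
    x ∈ Subfield.closure (constSet F n ∪ esymmSet F n ∪ {Ξ}) := by
  classical
  set G := Equiv.Perm (Fin n) with hG
  set k : Subfield K := FixedPoints.subfield G K with hk
  haveI : IsGalois k K := ⟨⟩
  set T := Subfield.closure (constSet F n ∪ esymmSet F n ∪ {Ξ}) with hT
  have hkT : ∀ y : k, algebraMap k K y ∈ T := by
    intro y
    have h1 : (y : K) ∈ Subfield.closure (constSet F n ∪ esymmSet F n) :=
      fixed_mem _ (fun σ => y.2 σ)
    exact Subfield.closure_mono Set.subset_union_left h1
  let T' : IntermediateField k K :=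
    { carrier := (T : Set K)
      mul_mem' := fun ha hb => T.mul_mem ha hb
      add_mem' := fun ha hb => T.add_mem ha hb
      one_mem' := T.one_mem
      zero_mem' := T.zero_mem
      algebraMap_mem' := hkT
      inv_mem' := fun z hz => T.inv_mem hz }
  have hΞE : Ξ ∈ IntermediateField.adjoin k ({Ξ} : Set K) :=
    IntermediateField.subset_adjoin k {Ξ} rfl
  suffices hxE : x ∈ IntermediateField.adjoin k ({Ξ} : Set K) by
    have hle : IntermediateField.adjoin k ({Ξ} : Set K) ≤ T' :=
      IntermediateField.adjoin_le_iff.mpr (by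
        intro z hz
        rw [Set.mem_singleton_iff] at hz
        subst hz
        exact Subfield.subset_closure (Or.inr rfl))
    exact hle hxE
  rw [← IsGalois.fixedField_fixingSubgroup (IntermediateField.adjoin k ({Ξ} : Set K))]
  intro g
  obtain ⟨σ, hσ⟩ := FixedPoints.toAlgAut_surjective G K (g : K ≃ₐ[k] K)
  have hgΞ : (g : K ≃ₐ[k] K) Ξ = Ξ := g.2 ⟨Ξ, hΞE⟩
  have hσΞ : permAct F n σ Ξ = Ξ := by
    rw [← hσ] at hgΞ
    exact hgΞ
  have hσx : permAct F n σ x = x := hx σ hσΞ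
  show (g : K ≃ₐ[k] K) x = x
  rw [← hσ]
  exact hσx

end Aux

/-- **Theorem 5.3.** Let `p` be prime, `ω ∈ F` a primitive `p`-th root of unity, and suppose
`γ^p = id`, `G_Φ` is the disjoint union of the cosets `G_Ψ, γG_Ψ, …, γ^{p−1}G_Ψ`, and
`γG_Ψ = G_Ψγ`.  Then `Θ = Σ_{i=0}^{p−1} ω^i·(γ^iΨ)` satisfies `G_Θ ⊇ G_Ψ` (hence
`Θ ∈ F(e_1,…,e_n,Ψ)`) and `Θ^p ∈ F(e_1,…,e_n,Φ)`. -/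
theorem lagrange_resolvent_power_mem
    (F : Type*) [Field F] [CharZero F] (n : ℕ)
    (p : ℕ) (hp : p.Prime) (ω : F) (hω : IsPrimitiveRoot ω p)
    (Φ Ψ : FractionRing (MvPolynomial (Fin n) F))
    (γ : Equiv.Perm (Fin n)) (hγp : γ ^ p = 1)
    (hdecomp : ∀ σ : Equiv.Perm (Fin n), permAct F n σ Φ = Φ ↔
      ∃! i : Fin p, permAct F n ((γ ^ (i : ℕ))⁻¹ * σ) Ψ = Ψ)
    (hcomm : {x : Equiv.Perm (Fin n) | ∃ h, permAct F n h Ψ = Ψ ∧ x = γ * h} =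
      {x : Equiv.Perm (Fin n) | ∃ h, permAct F n h Ψ = Ψ ∧ x = h * γ})
    (Θ : FractionRing (MvPolynomial (Fin n) F))
    (hΘ : Θ = ∑ i ∈ Finset.range p,
      algebraMap (MvPolynomial (Fin n) F) (FractionRing (MvPolynomial (Fin n) F)) (C ω) ^ i
        * permAct F n (γ ^ i) Ψ) :
    (∀ σ : Equiv.Perm (Fin n), permAct F n σ Ψ = Ψ → permAct F n σ Θ = Θ) ∧
    Θ ∈ Subfield.closure (constSet F n ∪ esymmSet F n ∪ {Ψ}) ∧
    Θ ^ p ∈ Subfield.closure (constSet F n ∪ esymmSet F n ∪ {Φ}) := by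
  set A := algebraMap (MvPolynomial (Fin n) F) (FractionRing (MvPolynomial (Fin n) F)) with hA
  have hcω_fix : ∀ σ : Equiv.Perm (Fin n), permAct F n σ (A (C ω)) = A (C ω) := fun σ => by
    rw [hA, permAct_algebraMap, rename_C]
  have hcωp : (A (C ω)) ^ p = 1 := by
    rw [← map_pow, ← map_pow, hω.pow_eq_one, map_one, map_one]
  -- conjugation by γ preserves G_Ψ
  have hconj : ∀ h : Equiv.Perm (Fin n), permAct F n h Ψ = Ψ →
      permAct F n (γ⁻¹ * h * γ) Ψ = Ψ := by
    intro h hh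
    have hmem : (h * γ) ∈ {x : Equiv.Perm (Fin n) | ∃ h', permAct F n h' Ψ = Ψ ∧ x = h' * γ} :=
      ⟨h, hh, rfl⟩
    rw [← hcomm] at hmem
    obtain ⟨h', hh', heq⟩ := hmem
    have : γ⁻¹ * h * γ = h' := by
      rw [mul_assoc, heq]
      group
    rw [this]
    exact hh'
  have hconj_pow : ∀ (i : ℕ) (h : Equiv.Perm (Fin n)), permAct F n h Ψ = Ψ →
      permAct F n ((γ ^ i)⁻¹ * h * γ ^ i) Ψ = Ψ := by
    intro i
    induction i with
    | zero => intro h hh; simpa using hh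
    | succ i ih =>
      intro h hh
      have h2 := hconj _ (ih h hh)
      have h3 : γ⁻¹ * ((γ ^ i)⁻¹ * h * γ ^ i) * γ = (γ ^ (i + 1))⁻¹ * h * γ ^ (i + 1) := by
        group
      rwa [h3] at h2
  -- Part 1
  have part1 : ∀ σ : Equiv.Perm (Fin n), permAct F n σ Ψ = Ψ → permAct F n σ Θ = Θ := by
    intro σ hσ
    rw [hΘ, map_sum]
    refine Finset.sum_congr rfl fun i _ => ?_
    rw [map_mul, map_pow, hcω_fix]
    congr 1
    rw [← permAct_mul]
    have h2 : σ * γ ^ i = γ ^ i * ((γ ^ i)⁻¹ * σ * γ ^ i) := by group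
    rw [h2, permAct_mul, hconj_pow i σ hσ]
  -- the resolvent transforms by ω⁻¹ under γ
  obtain ⟨f, hfdef⟩ : ∃ f : ℕ → FractionRing (MvPolynomial (Fin n) F),
      f = fun j => A (C ω) ^ j * permAct F n (γ ^ j) Ψ := ⟨_, rfl⟩
  have hfΘ : Θ = ∑ i ∈ Finset.range p, f i := by rw [hΘ, hfdef]
  have hf0p : f p = f 0 := by
    rw [hfdef]
    simp only [pow_zero, one_mul, hγp, hcωp]
  have claim1 : A (C ω) * permAct F n γ Θ = Θ := by
    have hstep : ∀ i : ℕ, A (C ω) * permAct F n γ (f i) = f (i + 1) := by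
      intro i
      rw [hfdef]
      simp only []
      rw [map_mul, map_pow, hcω_fix, ← permAct_mul, ← pow_succ']
      ring
    have hsum : A (C ω) * permAct F n γ Θ = ∑ i ∈ Finset.range p, f (i + 1) := by
      rw [hfΘ, map_sum, Finset.mul_sum]
      exact Finset.sum_congr rfl fun i _ => hstep i
    have e1 := Finset.sum_range_succ' f p
    have e2 := Finset.sum_range_succ f p
    rw [e2] at e1
    -- e1 : ∑ range p f + f p = ∑ range p (f (·+1)) + f 0
    rw [hsum, hfΘ]
    rw [hf0p] at e1
    exact add_right_cancel e1.symm
  have claim2 : ∀ i : ℕ, A (C ω) ^ i * permAct F n (γ ^ i) Θ = Θ := by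
    intro i
    induction i with
    | zero => simp [permAct_one]
    | succ i ih =>
      have hcalc : A (C ω) ^ (i + 1) * permAct F n (γ ^ (i + 1)) Θ =
          A (C ω) ^ i * permAct F n (γ ^ i) (A (C ω) * permAct F n γ Θ) := by
        rw [map_mul, hcω_fix, ← permAct_mul, ← pow_succ]
        ring
      rw [hcalc, claim1, ih]
  -- Part 3 fixedness
  have part3fix : ∀ σ : Equiv.Perm (Fin n), permAct F n σ Φ = Φ →
      permAct F n σ (Θ ^ p) = Θ ^ p := by
    intro σ hσ
    obtain ⟨i, hi, -⟩ := (hdecomp σ).mp hσ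
    have hσΘ : permAct F n σ Θ = permAct F n (γ ^ (i : ℕ)) Θ := by
      have hdc : σ = γ ^ (i : ℕ) * ((γ ^ (i : ℕ))⁻¹ * σ) := by group
      rw [hdc, permAct_mul, part1 _ hi]
    have h1 : A (C ω) ^ (i : ℕ) * permAct F n σ Θ = Θ := by
      rw [hσΘ]; exact claim2 i
    have h3 : (A (C ω) ^ (i : ℕ)) ^ p = 1 := by
      rw [← pow_mul, mul_comm, pow_mul, hcωp, one_pow]
    calc permAct F n σ (Θ ^ p) = (permAct F n σ Θ) ^ p := map_pow _ _ _
      _ = (A (C ω) ^ (i : ℕ)) ^ p * (permAct F n σ Θ) ^ p := by rw [h3, one_mul]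
      _ = (A (C ω) ^ (i : ℕ) * permAct F n σ Θ) ^ p := (mul_pow _ _ _).symm
      _ = Θ ^ p := by rw [h1]
  exact ⟨part1, fixed_mem_adjoin Ψ Θ part1, fixed_mem_adjoin Φ (Θ ^ p) part3fix⟩
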